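/- Let R be a ring that is a retract of a ring B: there is a ring homomorphism φ : B → R with φ|_R = id_R. If B is a unique factorization domain, then R is a unique factorization domain. -/

import Mathlib

/-- If `R` is a subring of `B` which is a retract of `B` (there is a ring homomorphism
`φ : B → R` restricting to the identity on `R`) and `B` is a UFD, then `R` is a UFD. -/
theorem retract_of_UFD_is_UFD {B : Type*} [CommRing B] [IsDomain B]
    [UniqueFactorizationMonoid B] (R : Subring B) (φ : B →+* R)
    (hφ : ∀ r : R, φ (r : B) = r) :
    UniqueFactorizationMonoid R := by
  -- units transfer: if x : R is a unit in B, it is a unit in R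
  have hunit : ∀ x : R, IsUnit (x : B) → IsUnit x := by
    intro x hx
    obtain ⟨u, hu⟩ := hx
    refine IsUnit.of_mul_eq_one (a := x) (φ ((u⁻¹ : Bˣ) : B)) ?_
    have : φ ((x : B) * ((u⁻¹ : Bˣ) : B)) = 1 := by
      rw [← hu, Units.mul_inv, map_one]
    rwa [map_mul, hφ] at this
  have hcoe : Function.Injective ((↑) : R → B) := Subtype.val_injective
  -- WfDvdMonoid R
  have wf : WfDvdMonoid R := by
    refine ⟨Subrelation.wf (r := InvImage DvdNotUnit ((↑) : R → B)) ?_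
      (InvImage.wf _ wellFounded_dvdNotUnit)⟩
    rintro a b ⟨ha, x, hx, hbx⟩
    exact ⟨fun h => ha (hcoe (by simpa using h)), (x : B),
      fun h => hx (hunit x h), by exact_mod_cast congrArg Subtype.val hbx⟩
  refine { wf with irreducible_iff_prime := fun {p} => ⟨fun hp => ?_, Prime.irreducible⟩ }
  -- p irreducible in R; show p prime
  have hp0 : p ≠ 0 := hp.ne_zero
  have hpB0 : (p : B) ≠ 0 := fun h => hp0 (hcoe (by simpa using h))
  obtain ⟨f, hfprime, hfassoc⟩ :=
    UniqueFactorizationMonoid.exists_prime_factors (p : B) hpB0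
  obtain ⟨u, hu⟩ := hfassoc
  -- p = φ(u) * (f.map φ).prod in R
  have hpeq : p = φ ((u : Bˣ) : B) * (f.map φ).prod := by
    have := congrArg φ hu.symm
    rw [map_mul, ← Multiset.prod_hom f φ] at this
    rw [← hφ p, this, mul_comm]
  -- some factor has non-unit image
  have hex : ∃ q ∈ f, ¬ IsUnit (φ q) := by
    by_contra h
    push_neg at h
    apply hp.not_isUnit
    rw [hpeq]
    refine IsUnit.mul (u.isUnit.map φ) ?_
    refine Multiset.prod_induction _ _ (fun a b => IsUnit.mul) isUnit_one ?_
    intro a ha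
    obtain ⟨q, hq, rfl⟩ := Multiset.mem_map.mp ha
    exact h q hq
  obtain ⟨q, hqf, hqu⟩ := hex
  -- p is associated to φ q in R
  classical
  have hqp : Associated (φ q) p := by
    have : p = φ q * (φ ((u : Bˣ) : B) * ((f.erase q).map φ).prod) := by
      rw [hpeq]
      rw [← Multiset.prod_map_erase (f := φ) hqf]
      ring
    rcases hp.isUnit_or_isUnit this with h | h
    · exact absurd h hqu
    · obtain ⟨v, hv⟩ := h
      exact ⟨v, by rw [hv, ← this]⟩
  -- q divides (p : B)
  have hqdvd : q ∣ (p : B) := (Multiset.dvd_prod hqf).trans (Dvd.intro _ hu)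
  refine ⟨hp0, hp.not_isUnit, fun a b hab => ?_⟩
  obtain ⟨c, hc⟩ := hab
  have hqab : q ∣ (a : B) * (b : B) := by
    refine hqdvd.trans ⟨(c : B), ?_⟩
    exact_mod_cast congrArg Subtype.val hc
  have key : ∀ x : R, q ∣ (x : B) → p ∣ x := by
    intro x ⟨d, hd⟩
    have : x = φ q * φ d := by
      rw [← map_mul, ← hd, hφ]
    exact dvd_trans hqp.symm.dvd ⟨φ d, this⟩
  rcases (hfprime q hqf).2.2 _ _ hqab with h | h
  · exact Or.inl (key a h)
  · exact Or.inr (key b h)
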